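/- Let L_PC be the first-order language with two binary relation symbols P and C (and equality), and consider the L_PC-structure whose universe is the set of all lines in the Euclidean plane, with P interpreted as 'distinct and parallel' and C interpreted as 'intersect in exactly one point'. There is no L_PC-formula φ(x,y) with two free variables such that for all lines a, b: a is perpendicular to b if and only if φ[a,b] holds in this structure. (O is not definable from P, C and = in the structure of lines of the Euclidean plane.) -/

import Mathlib

open FirstOrder Language Structure

/-- The Euclidean plane ℝ². -/
abbrev Plane := EuclideanSpace ℝ (Fin 2)

/-- A line in the Euclidean plane: a one-dimensional affine subspace of ℝ². -/
structure Line where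
  carrier : AffineSubspace ℝ Plane
  one_dim : Module.finrank ℝ carrier.direction = 1

/-- Two lines are perpendicular iff their direction subspaces are orthogonal. -/
def Line.Perp (a b : Line) : Prop :=
  a.carrier.direction ⟂ b.carrier.direction

/-- The relation symbols of L_PC: two binary relations P and C. -/
inductive PCRel : ℕ → Type
  | p : PCRel 2
  | c : PCRel 2

/-- The first-order language with two binary relation symbols P and C. -/
def LPC : Language := ⟨fun _ => Empty, PCRel⟩
  deriving IsRelational

/-- The L_PC-structure of lines of the Euclidean plane: P is 'distinct and parallel',
C is 'intersect in exactly one point'. -/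
instance : LPC.Structure Line where
  RelMap
    | .p => fun x => x 0 ≠ x 1 ∧ (x 0).carrier.direction = (x 1).carrier.direction
    | .c => fun x => ∃ pt : Plane,
        ((x 0).carrier : Set Plane) ∩ ((x 1).carrier : Set Plane) = {pt}

/- ### Auxiliary development -/

theorem Line.ext' {a b : Line} (h : a.carrier = b.carrier) : a = b := by
  cases a; cases b; simpa using h

/-- A non-conformal linear automorphism of the plane: scale the second coordinate by 2. -/
noncomputable def scale : Plane ≃ₗ[ℝ] Plane where
  toFun v := WithLp.toLp 2 (fun i => (if i = 0 then 1 else 2) * v i)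
  invFun v := WithLp.toLp 2 (fun i => (if i = 0 then 1 else 2)⁻¹ * v i)
  map_add' x y := by ext i; simp [mul_add]
  map_smul' c x := by ext i; simp; ring_nf
  left_inv v := by ext i; by_cases h : i = 0 <;> simp [h]
  right_inv v := by ext i; by_cases h : i = 0 <;> simp [h]

/-- Mapping a line under a linear automorphism of the plane. -/
noncomputable def Line.map (e : Plane ≃ₗ[ℝ] Plane) (l : Line) : Line where
  carrier := l.carrier.map e.toAffineEquiv.toAffineMap
  one_dim := by
    rw [AffineSubspace.map_direction]
    show Module.finrank ℝ (l.carrier.direction.map (e : Plane →ₗ[ℝ] Plane)) = 1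
    rw [LinearEquiv.finrank_map_eq]
    exact l.one_dim

theorem Line.map_carrierSet (e : Plane ≃ₗ[ℝ] Plane) (l : Line) :
    ((Line.map e l).carrier : Set Plane) = e '' (l.carrier : Set Plane) := by
  rw [Line.map, AffineSubspace.coe_map]; rfl

theorem Line.map_direction (e : Plane ≃ₗ[ℝ] Plane) (l : Line) :
    (Line.map e l).carrier.direction
      = l.carrier.direction.map (e : Plane →ₗ[ℝ] Plane) := by
  rw [Line.map, AffineSubspace.map_direction]; rfl

theorem Line.map_map (e : Plane ≃ₗ[ℝ] Plane) (f : Plane ≃ₗ[ℝ] Plane) (l : Line)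
    (h : ∀ x, f (e x) = x) : Line.map f (Line.map e l) = l := by
  apply Line.ext'
  show (l.carrier.map _).map _ = l.carrier
  rw [AffineSubspace.map_map]
  have : f.toAffineEquiv.toAffineMap.comp e.toAffineEquiv.toAffineMap
      = AffineMap.id ℝ Plane := by
    apply AffineMap.ext; intro x; exact h x
  rw [this, AffineSubspace.map_id]

/-- The bijection on lines induced by a linear automorphism of the plane. -/
noncomputable def lineEquiv (e : Plane ≃ₗ[ℝ] Plane) : Line ≃ Line where
  toFun := Line.map e
  invFun := Line.map e.symm
  left_inv l := Line.map_map e e.symm l (fun x => e.symm_apply_apply x)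
  right_inv l := Line.map_map e.symm e l (fun x => e.apply_symm_apply x)

/-- The induced map on lines is an L_PC-automorphism. -/
noncomputable def lpcEquiv (e : Plane ≃ₗ[ℝ] Plane) : Line ≃[LPC] Line where
  toEquiv := lineEquiv e
  map_fun' := fun f _ => isEmptyElim f
  map_rel' := by
    intro n r x
    cases r with
    | p =>
        show ((lineEquiv e) (x 0) ≠ (lineEquiv e) (x 1) ∧ _) ↔ (x 0 ≠ x 1 ∧ _)
        constructor
        · rintro ⟨h1, h2⟩
          refine ⟨fun h => h1 (by rw [h]), ?_⟩
          have h2' : (x 0).carrier.direction.map (e : Plane →ₗ[ℝ] Plane)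
              = (x 1).carrier.direction.map (e : Plane →ₗ[ℝ] Plane) := by
            rw [← Line.map_direction, ← Line.map_direction]; exact h2
          exact Submodule.map_injective_of_injective e.injective h2'
        · rintro ⟨h1, h2⟩
          refine ⟨fun h => h1 ((lineEquiv e).injective h), ?_⟩
          show (Line.map e (x 0)).carrier.direction = (Line.map e (x 1)).carrier.direction
          rw [Line.map_direction, Line.map_direction, h2]
    | c =>
        show (∃ pt : Plane, ((Line.map e (x 0)).carrier : Set Plane)
            ∩ ((Line.map e (x 1)).carrier : Set Plane) = {pt}) ↔ _
        rw [Line.map_carrierSet, Line.map_carrierSet,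
          (Set.image_inter e.injective).symm]
        constructor
        · rintro ⟨pt, hpt⟩
          refine ⟨e.symm pt, ?_⟩
          have := congrArg (fun s => e.symm '' s) hpt
          simpa [Set.image_image] using this
        · rintro ⟨pt, hpt⟩
          exact ⟨e pt, by rw [hpt, Set.image_singleton]⟩

/-- A line through the origin with the given nonzero direction vector. -/
noncomputable def lineOf (u : Plane) (hu : u ≠ 0) : Line where
  carrier := AffineSubspace.mk' 0 (ℝ ∙ u)
  one_dim := by
    rw [AffineSubspace.direction_mk']
    exact finrank_span_singleton hu

theorem lineOf_direction (u : Plane) (hu : u ≠ 0) :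
    (lineOf u hu).carrier.direction = ℝ ∙ u :=
  AffineSubspace.direction_mk' _ _

/-- The two direction vectors (1,1) and (1,-1). -/
noncomputable def uvec : Plane := WithLp.toLp 2 (fun i : Fin 2 => if i = 0 then (1 : ℝ) else 1)
noncomputable def wvec : Plane := WithLp.toLp 2 (fun i : Fin 2 => if i = 0 then (1 : ℝ) else -1)

theorem uvec_ne : uvec ≠ 0 := by
  intro h
  have := congrArg (fun v : Plane => v 0) h
  simp [uvec] at this

theorem wvec_ne : wvec ≠ 0 := by
  intro h
  have := congrArg (fun v : Plane => v 0) h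
  simp [wvec] at this

/-- perpendicularity is not definable by any L_PC-formula in this structure. -/
theorem statement_11 :
    ¬ ∃ φ : LPC.Formula (Fin 2), ∀ a b : Line, (a.Perp b ↔ φ.Realize ![a, b]) := by
  rintro ⟨φ, hφ⟩
  set a := lineOf uvec uvec_ne with ha
  set b := lineOf wvec wvec_ne with hb
  set g := lpcEquiv scale with hg
  -- a and b are perpendicular
  have hperp : a.Perp b := by
    rw [Line.Perp, lineOf_direction, lineOf_direction, Submodule.isOrtho_span]
    rintro u rfl v rfl
    simp [PiLp.inner_apply, Fin.sum_univ_two, uvec, wvec]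
  -- but their images under g are not
  have hnperp : ¬ (g a).Perp (g b) := by
    intro h
    rw [Line.Perp] at h
    have hmem1 : scale uvec ∈ (g a).carrier.direction := by
      show scale uvec ∈ (Line.map scale a).carrier.direction
      rw [Line.map_direction, ha, lineOf_direction]
      exact Submodule.mem_map_of_mem (Submodule.mem_span_singleton_self _)
    have hmem2 : scale wvec ∈ (g b).carrier.direction := by
      show scale wvec ∈ (Line.map scale b).carrier.direction
      rw [Line.map_direction, hb, lineOf_direction]
      exact Submodule.mem_map_of_mem (Submodule.mem_span_singleton_self _)
    have := Submodule.isOrtho_iff_inner_eq.mp h _ hmem1 _ hmem2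
    rw [PiLp.inner_apply, Fin.sum_univ_two] at this
    simp [scale, uvec, wvec] at this
    norm_num at this
  apply hnperp
  rw [hφ]
  have hcomp : ![g a, g b] = (g : Line → Line) ∘ ![a, b] := by
    funext i
    fin_cases i <;> rfl
  rw [hcomp, StrongHomClass.realize_formula g]
  exact (hφ a b).mp hperp
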